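/- Let K be the matrix J·KW(G,x) of a planar weighted graph, for each oriented edge e fix a square root η_e of its unit direction vector, let U be the diagonal matrix with entries η_e, and set K̂ = i·U·K·U*. Then K̂ is a real antisymmetric matrix, and det K̂ = det KW(G,x). -/

import Mathlib

open scoped Classical
open Matrix

noncomputable section

variable {V F : Type*}

/-- Origin (tail) of an oriented edge `(f, b)` of the graph with endpoint map `ends`. -/
def oTail (ends : F → V × V) (p : F × Bool) : V :=
  if p.2 then (ends p.1).1 else (ends p.1).2

/-- Head (terminal vertex) of an oriented edge. -/
def oHead (ends : F → V × V) (p : F × Bool) : V :=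
  if p.2 then (ends p.1).2 else (ends p.1).1

/-- Reversal of an oriented edge. -/
def oRev (p : F × Bool) : F × Bool := (p.1, !p.2)

/-- Direction (as a complex number) of an oriented edge in the straight-line drawing
given by the vertex positions `pos`. -/
def oDir (ends : F → V × V) (pos : V → ℂ) (p : F × Bool) : ℂ :=
  pos (oHead ends p) - pos (oTail ends p)

/-- The angle (argument of the direction) of an oriented edge. -/
def oAng (ends : F → V × V) (pos : V → ℂ) (p : F × Bool) : ℝ :=
  Complex.arg (oDir ends pos p)

/-- A dimer configuration (perfect matching) on the terminal graph `G^K`: a fixed-point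
free involution of the oriented edges of `G`, matching each oriented edge either to its
reversal (a "long" dimer) or to another oriented edge with the same origin
(a "short" dimer). -/
def IsTerminalMatching (ends : F → V × V) (m : F × Bool → F × Bool) : Prop :=
  Function.Involutive m ∧ (∀ p, m p ≠ p) ∧
    ∀ p, m p = oRev p ∨ oTail ends (m p) = oTail ends p

/-- An even subgraph: a set of edges in which every vertex has even degree. -/
def IsEvenSubgraph [Fintype F] [DecidableEq V] (ends : F → V × V) (P : Finset F) :
    Prop :=
  ∀ v : V, Even ((P.filter (fun f => (ends f).1 = v)).card +
    (P.filter (fun f => (ends f).2 = v)).card)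

/-- The weight `x^K(D)` of a dimer configuration: long edges have weight `1` and the
short edge joining `e, e'` has weight `(x_e x_{e'})^{1/2}`. -/
def matchWeight [Fintype F] (x : F → ℝ) (m : F × Bool → F × Bool) : ℝ :=
  ∏ p ∈ Finset.univ.filter (fun p : F × Bool => m p ≠ oRev p), Real.sqrt (x p.1)

/-- `p` is the endpoint of a short dimer of `m` with the smaller angle. -/
def isLow (ends : F → V × V) (pos : V → ℂ) (m : F × Bool → F × Bool)
    (p : F × Bool) : Prop :=
  m p ≠ oRev p ∧ oAng ends pos p < oAng ends pos (m p)

/-- The number `t(D)` of pairs of (short) dimers of `m` that cross in the drawing: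
two chords at the same vertex cross iff their angles interleave in the cyclic order. -/
def selfCross [Fintype F] (ends : F → V × V) (pos : V → ℂ)
    (m : F × Bool → F × Bool) : ℕ :=
  (Finset.univ.filter (fun pr : (F × Bool) × (F × Bool) =>
    isLow ends pos m pr.1 ∧ isLow ends pos m pr.2 ∧
    oTail ends pr.1 = oTail ends pr.2 ∧
    oAng ends pos pr.1 < oAng ends pos pr.2 ∧
    oAng ends pos pr.2 < oAng ends pos (m pr.1) ∧
    oAng ends pos (m pr.1) < oAng ends pos (m pr.2))).card

/-- The Kac–Ward transition matrix `T`, indexed by oriented edges: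
`T_{e,e'} = exp((i/2)·w(e,e'))·(x_e x_{e'})^{1/2}` if `t(e) = o(e')` and `e' ≠ ē`,
and `0` otherwise, where `w(e,e') ∈ (-π,π)` is the turning angle from `e` to `e'`. -/
def KWT [DecidableEq V] [DecidableEq F] (ends : F → V × V) (pos : V → ℂ)
    (x : F → ℝ) : Matrix (F × Bool) (F × Bool) ℂ :=
  Matrix.of fun e e' =>
    if oHead ends e = oTail ends e' ∧ e' ≠ oRev e then
      Complex.exp (Complex.I *
          ((Complex.arg (oDir ends pos e' / oDir ends pos e) / 2 : ℝ) : ℂ)) *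
        ((Real.sqrt (x e.1 * x e'.1) : ℝ) : ℂ)
    else 0

/-- The Kac–Ward matrix `KW(G,x) = I - T`. -/
def KacWard [DecidableEq V] [DecidableEq F] (ends : F → V × V) (pos : V → ℂ)
    (x : F → ℝ) : Matrix (F × Bool) (F × Bool) ℂ :=
  1 - KWT ends pos x

/-- The permutation matrix `J` exchanging each oriented edge with its reversal. -/
def revMat (F : Type*) [DecidableEq F] : Matrix (F × Bool) (F × Bool) ℂ :=
  Matrix.of fun e e' => if e' = oRev e then 1 else 0

/-- The matrix `K̂ = i·U·K·U*`, where `K = J·KW(G,x)` and `U` is the diagonal matrix of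
the fixed square roots `η_e` of the unit direction vectors of the oriented edges. -/
def KWhat [DecidableEq V] [Fintype F] [DecidableEq F] (ends : F → V × V) (pos : V → ℂ)
    (x : F → ℝ) (η : F × Bool → ℂ) : Matrix (F × Bool) (F × Bool) ℂ :=
  Complex.I • (Matrix.diagonal η * (revMat F * KacWard ends pos x) *
    (Matrix.diagonal η).conjTranspose)


section Statement11Aux

variable {V F : Type*}

lemma oRev_invol (p : F × Bool) : oRev (oRev p) = p := by simp [oRev]

lemma oTail_oRev (ends : F → V × V) (p : F × Bool) :
    oTail ends (oRev p) = oHead ends p := by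
  rcases p with ⟨f, b⟩; cases b <;> simp [oTail, oHead, oRev]

lemma oHead_oRev (ends : F → V × V) (p : F × Bool) :
    oHead ends (oRev p) = oTail ends p := by
  rcases p with ⟨f, b⟩; cases b <;> simp [oTail, oHead, oRev]

lemma oDir_oRev (ends : F → V × V) (pos : V → ℂ) (p : F × Bool) :
    oDir ends pos (oRev p) = - oDir ends pos p := by
  simp [oDir, oTail_oRev, oHead_oRev, neg_sub]

lemma expHalfArg_sq (z : ℂ) (h : z ≠ 0) :
    Complex.exp (Complex.I * ((Complex.arg z / 2 : ℝ) : ℂ)) ^ 2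
      = z / (‖z‖ : ℂ) := by
  rw [← Complex.exp_nat_mul]
  have h2 : ((2:ℕ):ℂ) * (Complex.I * ((Complex.arg z / 2 : ℝ) : ℂ))
      = (Complex.arg z : ℂ) * Complex.I := by push_cast; ring
  rw [h2, eq_div_iff (by simpa using norm_ne_zero_iff.mpr h), mul_comm,
    Complex.norm_mul_exp_arg_mul_I]


lemma eq_or_rev_of_fst_eq {F : Type*} {e e' : F × Bool} (h : e'.1 = e.1) :
    e' = e ∨ e' = oRev e := by
  rcases e with ⟨f, b⟩
  rcases e' with ⟨f', b'⟩
  simp only at h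
  subst h
  cases b <;> cases b' <;> simp [oRev]

lemma sq_eq_one_cases {a : ℂ} (h : a ^ 2 = 1) : a = 1 ∨ a = -1 := by
  have h0 : (a - 1) * (a + 1) = 0 := by linear_combination h
  rcases mul_eq_zero.mp h0 with h' | h'
  · exact Or.inl (by linear_combination h')
  · exact Or.inr (by linear_combination h')

lemma im_eq_zero_of_sq_one {a : ℂ} (h : a ^ 2 = 1) : a.im = 0 := by
  rcases sq_eq_one_cases h with h' | h' <;> simp [h']

lemma neg_of_sq_one_mul {a b : ℂ} (h : a ^ 2 = 1) (hab : a * b = -1) : b = -a := by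
  calc b = a ^ 2 * b := by rw [h]; ring
    _ = a * (a * b) := by ring
    _ = -a := by rw [hab]; ring

end Statement11Aux

/-- Let `K = J·KW(G,x)`, fix for each oriented edge `e` a square root
`η_e` of its unit direction vector, let `U = diag(η)` and `K̂ = i·U·K·U*`.  Then `K̂` is
a real antisymmetric matrix and `det K̂ = det KW(G,x)`. -/
theorem statement11 [Fintype V] [DecidableEq V] [Fintype F] [DecidableEq F]
    (ends : F → V × V) (pos : V → ℂ) (x : F → ℝ)
    (hx : ∀ f, 0 ≤ x f)
    (hinj : Function.Injective pos)
    (hloop : ∀ f : F, (ends f).1 ≠ (ends f).2)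
    (hplanar : ∀ f g : F, f ≠ g → ∀ z : ℂ,
      z ∈ openSegment ℝ (pos (ends f).1) (pos (ends f).2) →
      z ∈ openSegment ℝ (pos (ends g).1) (pos (ends g).2) → False)
    (hvert : ∀ (f : F) (v : V),
      pos v ∉ openSegment ℝ (pos (ends f).1) (pos (ends f).2))
    (η : F × Bool → ℂ)
    (hη : ∀ e : F × Bool,
      (η e) ^ 2 * ((‖oDir ends pos e‖ : ℝ) : ℂ) = oDir ends pos e) :
    (∀ a b : F × Bool, (KWhat ends pos x η a b).im = 0) ∧
    (KWhat ends pos x η).transpose = -(KWhat ends pos x η) ∧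
    (KWhat ends pos x η).det = (KacWard ends pos x).det := by
  classical
  have htail_ne_head : ∀ p : F × Bool, oTail ends p ≠ oHead ends p := by
    rintro ⟨f, b⟩ h
    cases b
    · exact hloop f h.symm
    · exact hloop f h
  have hdne : ∀ p : F × Bool, oDir ends pos p ≠ 0 := by
    intro p
    refine sub_ne_zero.mpr (fun h => htail_ne_head p ?_)
    exact (hinj h).symm
  have habs : ∀ p : F × Bool, ((‖oDir ends pos p‖ : ℝ) : ℂ) ≠ 0 := by
    intro p; simpa using norm_ne_zero_iff.mpr (hdne p)
  have hηsq : ∀ p : F × Bool,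
      (η p) ^ 2 = oDir ends pos p / (‖oDir ends pos p‖ : ℂ) := by
    intro p; rw [eq_div_iff (habs p)]; exact hη p
  have hηconj : ∀ p : F × Bool, η p * (starRingEnd ℂ) (η p) = 1 := by
    intro p
    have h1 := congrArg (fun z : ℂ => ‖z‖) (hη p)
    rw [norm_mul, norm_pow, Complex.norm_real, norm_norm] at h1
    have hadne : ‖oDir ends pos p‖ ≠ 0 := norm_ne_zero_iff.mpr (hdne p)
    have h2 : ‖η p‖ ^ 2 = 1 :=
      mul_right_cancel₀ hadne (h1.trans (one_mul _).symm)
    rw [Complex.mul_conj, Complex.normSq_eq_norm_sq, h2]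
    norm_num
  have hEnt : ∀ e e' : F × Bool, KWhat ends pos x η e e' =
      Complex.I * (η e * KacWard ends pos x (oRev e) e' * (starRingEnd ℂ) (η e')) := by
    intro e e'
    simp only [KWhat, Matrix.smul_apply, smul_eq_mul]
    congr 1
    rw [Matrix.diagonal_conjTranspose, Matrix.mul_diagonal, Matrix.diagonal_mul]
    have hRK : (revMat F * KacWard ends pos x) e e' = KacWard ends pos x (oRev e) e' := by
      rw [Matrix.mul_apply]
      rw [Finset.sum_eq_single (oRev e)]
      · simp [revMat]
      · intro k _ hk; simp [revMat, hk]
      · intro h; exact absurd (Finset.mem_univ _) h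
    rw [hRK]
    simp [Pi.star_apply, Complex.star_def]
  have hval : ∀ e e' : F × Bool, KacWard ends pos x (oRev e) e' =
      if e' = oRev e then 1
      else if oTail ends e' = oTail ends e ∧ e' ≠ e then
        -(Complex.exp (Complex.I *
            ((Complex.arg (oDir ends pos e' / (- oDir ends pos e)) / 2 : ℝ) : ℂ)) *
          ((Real.sqrt (x e.1 * x e'.1) : ℝ) : ℂ))
      else 0 := by
    intro e e'
    have hKW : KacWard ends pos x (oRev e) e'
        = (if oRev e = e' then (1:ℂ) else 0) - KWT ends pos x (oRev e) e' := by
      simp [KacWard, Matrix.sub_apply, Matrix.one_apply]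
    rw [hKW]
    simp only [KWT, Matrix.of_apply, oHead_oRev, oRev_invol, oDir_oRev]
    by_cases h1 : e' = oRev e
    · subst h1
      have hcond : ¬ (oTail ends e = oTail ends (oRev e) ∧ oRev e ≠ e) := by
        rintro ⟨hc, -⟩
        exact htail_ne_head e (by rw [hc, oTail_oRev])
      simp [hcond]
    · have h1' : ¬ (oRev e = e') := fun h => h1 h.symm
      by_cases h2 : oTail ends e' = oTail ends e ∧ e' ≠ e
      · have hcond : oTail ends e = oTail ends e' ∧ e' ≠ e := ⟨h2.1.symm, h2.2⟩
        rw [if_neg h1', if_pos hcond, if_neg h1, if_pos h2]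
        simp only [oRev]
        ring
      · have hcond : ¬ (oTail ends e = oTail ends e' ∧ e' ≠ e) :=
          fun h => h2 ⟨h.1.symm, h.2⟩
        simp [h1, h1', h2, hcond]
  have hkey : ∀ e e' : F × Bool,
      (KWhat ends pos x η e e').im = 0 ∧
      KWhat ends pos x η e' e = - KWhat ends pos x η e e' := by
    intro e e'
    by_cases h1 : e' = oRev e
    · subst h1
      have ha : KWhat ends pos x η e (oRev e)
          = Complex.I * (η e * (starRingEnd ℂ) (η (oRev e))) := by
        rw [hEnt, hval, if_pos rfl]; ring
      have hb : KWhat ends pos x η (oRev e) e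
          = Complex.I * (η (oRev e) * (starRingEnd ℂ) (η e)) := by
        rw [hEnt, hval, if_pos (oRev_invol e).symm]; ring
      have hsq : (Complex.I * (η e * (starRingEnd ℂ) (η (oRev e)))) ^ 2 = 1 := by
        have hx2 : (Complex.I * (η e * (starRingEnd ℂ) (η (oRev e)))) ^ 2
            = Complex.I ^ 2 * ((η e) ^ 2 * (starRingEnd ℂ) ((η (oRev e)) ^ 2)) := by
          rw [map_pow]; ring
        rw [hx2, hηsq, hηsq, oDir_oRev, Complex.I_sq]
        rw [norm_neg, map_div₀, Complex.conj_ofReal, map_neg]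
        have hA : ((‖oDir ends pos e‖ : ℝ):ℂ) ≠ 0 := habs e
        field_simp
        rw [Complex.mul_conj, Complex.normSq_eq_norm_sq]
        push_cast
        ring
      refine ⟨?_, ?_⟩
      · rw [ha]; exact im_eq_zero_of_sq_one hsq
      · rw [ha, hb]
        have hab : (Complex.I * (η e * (starRingEnd ℂ) (η (oRev e)))) *
            (Complex.I * (η (oRev e) * (starRingEnd ℂ) (η e))) = -1 := by
          rw [show (Complex.I * (η e * (starRingEnd ℂ) (η (oRev e)))) *
              (Complex.I * (η (oRev e) * (starRingEnd ℂ) (η e)))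
              = Complex.I ^ 2 * ((η e * (starRingEnd ℂ) (η e)) *
                (η (oRev e) * (starRingEnd ℂ) (η (oRev e)))) from by ring,
            hηconj e, hηconj (oRev e), Complex.I_sq]
          ring
        exact neg_of_sq_one_mul hsq hab
    · have h1' : ¬ (e = oRev e') := fun h => h1 (by rw [h, oRev_invol])
      by_cases h2 : oTail ends e' = oTail ends e ∧ e' ≠ e
      · have h2' : oTail ends e = oTail ends e' ∧ e ≠ e' :=
          ⟨h2.1.symm, fun h => h2.2 h.symm⟩
        set E1 := Complex.exp (Complex.I *
          ((Complex.arg (oDir ends pos e' / - oDir ends pos e) / 2 : ℝ) : ℂ)) with hE1def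
        set E2 := Complex.exp (Complex.I *
          ((Complex.arg (oDir ends pos e / - oDir ends pos e') / 2 : ℝ) : ℂ)) with hE2def
        set S : ℂ := ((Real.sqrt (x e.1 * x e'.1) : ℝ) : ℂ) with hSdef
        have ha : KWhat ends pos x η e e'
            = -(Complex.I * (η e * E1 * (starRingEnd ℂ) (η e'))) * S := by
          rw [hEnt, hval, if_neg h1, if_pos h2, hE1def, hSdef]
          ring
        have hb : KWhat ends pos x η e' e
            = -(Complex.I * (η e' * E2 * (starRingEnd ℂ) (η e))) * S := by
          rw [hEnt, hval, if_neg h1', if_pos h2', hE2def, hSdef,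
            show Real.sqrt (x e'.1 * x e.1) = Real.sqrt (x e.1 * x e'.1) from by
              rw [mul_comm]]
          ring
        set c1 := -(Complex.I * (η e * E1 * (starRingEnd ℂ) (η e'))) with hc1def
        set c2 := -(Complex.I * (η e' * E2 * (starRingEnd ℂ) (η e))) with hc2def
        have hZne : oDir ends pos e' / - oDir ends pos e ≠ 0 :=
          div_ne_zero (hdne e') (neg_ne_zero.mpr (hdne e))
        have hc1sq : c1 ^ 2 = 1 := by
          have hx2 : c1 ^ 2 = Complex.I ^ 2 *
              ((η e) ^ 2 * E1 ^ 2 * (starRingEnd ℂ) ((η e') ^ 2)) := by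
            rw [hc1def, map_pow]; ring
          rw [hx2, Complex.I_sq, hηsq e, hηsq e', hE1def, expHalfArg_sq _ hZne]
          rw [norm_div, norm_neg, map_div₀, Complex.conj_ofReal]
          have hA : ((‖oDir ends pos e‖ : ℝ):ℂ) ≠ 0 := habs e
          have hA' : ((‖oDir ends pos e'‖ : ℝ):ℂ) ≠ 0 := habs e'
          have hD0 : oDir ends pos e ≠ 0 := hdne e
          have hD0' : oDir ends pos e' ≠ 0 := hdne e'
          have hcc : oDir ends pos e' * (starRingEnd ℂ) (oDir ends pos e')
              = ((‖oDir ends pos e'‖ : ℝ):ℂ) ^ 2 := by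
            rw [Complex.mul_conj, Complex.normSq_eq_norm_sq]; push_cast; ring
          push_cast
          field_simp
          linear_combination
            hcc
        have hargZ : Complex.arg (oDir ends pos e' / - oDir ends pos e) ≠ Real.pi := by
          intro hpi
          rw [Complex.arg_eq_pi_iff] at hpi
          obtain ⟨hre, him⟩ := hpi
          have hZeq : oDir ends pos e' / - oDir ends pos e
              = (((oDir ends pos e' / - oDir ends pos e).re : ℝ) : ℂ) := by
            apply Complex.ext <;> simp [him]
          have hDne : (- oDir ends pos e) ≠ 0 := neg_ne_zero.mpr (hdne e)
          obtain ⟨t, ht, hD'eq⟩ : ∃ t : ℝ, 0 < t ∧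
              oDir ends pos e' = ((t : ℝ) : ℂ) * oDir ends pos e := by
            refine ⟨-(oDir ends pos e' / - oDir ends pos e).re, by linarith, ?_⟩
            have h3 := (div_eq_iff hDne).mp hZeq
            push_cast
            linear_combination h3
          have hff : e'.1 ≠ e.1 := fun hfe =>
            (eq_or_rev_of_fst_eq hfe).elim h2.2 h1
          obtain ⟨s, hs0, hs1, hst⟩ : ∃ s : ℝ, 0 < s ∧ s < 1 ∧ s < t := by
            have hmin : 0 < min 1 t := lt_min one_pos ht
            have hl := min_le_left 1 t
            have hr := min_le_right 1 t
            exact ⟨min 1 t / 2, by linarith, by linarith, by linarith⟩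
          have hmem : ∀ (p : F × Bool) (u : ℝ), 0 < u → u < 1 →
              pos (oTail ends p) + (u:ℂ) * oDir ends pos p ∈
                openSegment ℝ (pos (ends p.1).1) (pos (ends p.1).2) := by
            intro p u hu0 hu1
            have hbase : pos (oTail ends p) + (u:ℂ) * oDir ends pos p ∈
                openSegment ℝ (pos (oTail ends p)) (pos (oHead ends p)) := by
              refine ⟨1 - u, u, by linarith, hu0, by ring, ?_⟩
              rw [Complex.real_smul, Complex.real_smul]
              simp only [oDir]
              push_cast
              ring
            rcases p with ⟨f, b⟩
            cases b
            · rw [openSegment_symm]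
              simpa [oTail, oHead] using hbase
            · simpa [oTail, oHead] using hbase
          have hm1 := hmem e s hs0 hs1
          have hm2 := hmem e' (s / t) (by positivity) ((div_lt_one ht).mpr hst)
          have hpt : pos (oTail ends e') + ((s/t : ℝ):ℂ) * oDir ends pos e'
              = pos (oTail ends e) + (s:ℂ) * oDir ends pos e := by
            rw [h2.1, hD'eq]
            have htne : (t:ℂ) ≠ 0 := by exact_mod_cast ht.ne'
            push_cast
            field_simp
          rw [hpt] at hm2
          exact hplanar e.1 e'.1 (fun h => hff h.symm) _ hm1 hm2
        have hc1c2 : c1 * c2 = -1 := by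
          have hE : E1 * E2 = 1 := by
            rw [hE1def, hE2def]
            have hinv : oDir ends pos e / - oDir ends pos e'
                = (oDir ends pos e' / - oDir ends pos e)⁻¹ := by
              rw [inv_div, div_neg, neg_div]
            rw [hinv, Complex.arg_inv, if_neg hargZ, ← Complex.exp_add,
              show Complex.I *
                  ((Complex.arg (oDir ends pos e' / - oDir ends pos e)/2 : ℝ):ℂ) +
                  Complex.I *
                  (((-Complex.arg (oDir ends pos e' / - oDir ends pos e))/2 : ℝ):ℂ) = 0
                from by push_cast; ring,
              Complex.exp_zero]
          have hx2 : c1 * c2 = Complex.I ^ 2 * ((η e * (starRingEnd ℂ) (η e)) *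
              (η e' * (starRingEnd ℂ) (η e')) * (E1 * E2)) := by
            rw [hc1def, hc2def]; ring
          rw [hx2, hηconj e, hηconj e', hE, Complex.I_sq]; ring
        refine ⟨?_, ?_⟩
        · rw [ha]
          rcases sq_eq_one_cases hc1sq with h | h <;> rw [h, hSdef] <;> simp
        · rw [ha, hb, neg_of_sq_one_mul hc1sq hc1c2]
          ring
      · have h2'' : ¬ (oTail ends e = oTail ends e' ∧ e ≠ e') :=
          fun h => h2 ⟨h.1.symm, fun hh => h.2 hh.symm⟩
        have ha : KWhat ends pos x η e e' = 0 := by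
          rw [hEnt, hval, if_neg h1, if_neg h2]; ring
        have hb : KWhat ends pos x η e' e = 0 := by
          rw [hEnt, hval, if_neg h1', if_neg h2'']; ring
        refine ⟨by rw [ha]; simp, by rw [ha, hb]; simp⟩
  refine ⟨fun a b => (hkey a b).1, ?_, ?_⟩
  · ext a b
    rw [Matrix.transpose_apply, Matrix.neg_apply]
    exact (hkey a b).2
  · have hperm : revMat F
        = Equiv.Perm.permMatrix ℂ
            (Equiv.prodCongrRight (fun _ : F => Equiv.swap false true)) := by
      ext ⟨f, b⟩ e'
      simp only [revMat, Matrix.of_apply, Equiv.Perm.permMatrix, PEquiv.toMatrix_apply,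
        Equiv.toPEquiv_apply, Option.mem_def, Option.some.injEq,
        Equiv.prodCongrRight_apply]
      cases b <;> simp [oRev, eq_comm, Equiv.swap_apply_left, Equiv.swap_apply_right]
    have hsign : Equiv.Perm.sign
        (Equiv.prodCongrRight (fun _ : F => Equiv.swap false true))
        = (-1) ^ (Fintype.card F) := by
      rw [Equiv.Perm.sign_prodCongrRight]
      simp [Equiv.Perm.sign_swap]
    have hdetR : (revMat F).det = (-1 : ℂ) ^ (Fintype.card F) := by
      rw [hperm, Matrix.det_permutation, hsign]
      push_cast
      ring
    have hdiag : (Matrix.diagonal η).det * ((Matrix.diagonal η).conjTranspose).det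
        = 1 := by
      rw [Matrix.det_conjTranspose, Matrix.det_diagonal]
      rw [show star (∏ i, η i) = ∏ i, (starRingEnd ℂ) (η i) from
        map_prod (starRingEnd ℂ) η Finset.univ]
      rw [← Finset.prod_mul_distrib, Finset.prod_congr rfl (fun i _ => hηconj i)]
      simp
    have hKWdef : KWhat ends pos x η = Complex.I • (Matrix.diagonal η *
        (revMat F * KacWard ends pos x) * (Matrix.diagonal η).conjTranspose) := rfl
    rw [hKWdef, Matrix.det_smul, Matrix.det_mul, Matrix.det_mul, Matrix.det_mul, hdetR]
    have hcard : Fintype.card (F × Bool) = 2 * Fintype.card F := by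
      simp [Fintype.card_prod, mul_comm]
    rw [hcard, pow_mul, Complex.I_sq]
    have hneg : ((-1 : ℂ)) ^ (Fintype.card F) * (-1) ^ (Fintype.card F) = 1 := by
      rw [← pow_add, ← two_mul, pow_mul]
      norm_num
    linear_combination ((Matrix.diagonal η).det *
        ((Matrix.diagonal η).conjTranspose).det * (KacWard ends pos x).det) * hneg +
      (KacWard ends pos x).det * hdiag
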